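/- Let X be a Banach space with the P_N Dunford–Pettis property in the form: whenever (P_n) is a weakly null sequence of N-homogeneous polynomials and (x_n) converges P_N-weakly to x, then P_n(x_n) → 0. Then for every m > N, if (x_n) is a P_N-weakly null sequence in X, then θ_m(x_n) = x_n⊗⋯⊗x_n (m times) is weakly null in the m-fold projective tensor product of X. -/

import Mathlib

open Filter Topology

/-- If `X` has the `P_N` Dunford–Pettis property (weakly null sequences of `N`-homogeneous
polynomials tend to zero along `P_N`-weakly convergent sequences), then for every `m > N`,
every `P_N`-weakly null sequence `(x_n)` has `θ_m(x_n) = x_n ⊗ ⋯ ⊗ x_n` weakly null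
in the `m`-fold projective tensor product; equivalently, `A (x_n, …, x_n) → 0` for every
bounded `m`-linear form `A` (the dual of the `m`-fold projective tensor product). -/
theorem theta_m_weakly_null_of_PN_DunfordPettis {X : Type*} [NormedAddCommGroup X]
    [NormedSpace ℂ X] [CompleteSpace X] (N : ℕ) (hN : 0 < N)
    (hDP : ∀ (P : ℕ → ContinuousMultilinearMap ℂ (fun _ : Fin N => X) ℂ),
      (∀ n (σ : Equiv.Perm (Fin N)) (v : Fin N → X), P n (v ∘ σ) = P n v) →
      (∀ Φ : StrongDual ℂ (ContinuousMultilinearMap ℂ (fun _ : Fin N => X) ℂ),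
        Tendsto (fun n => Φ (P n)) atTop (𝓝 0)) →
      ∀ (x : ℕ → X) (x₀ : X),
        (∀ M : ℕ, 1 ≤ M → M ≤ N →
          ∀ A : ContinuousMultilinearMap ℂ (fun _ : Fin M => X) ℂ,
            Tendsto (fun n => A (fun _ => x n)) atTop (𝓝 (A (fun _ => x₀)))) →
        Tendsto (fun n => P n (fun _ => x n)) atTop (𝓝 0))
    (x : ℕ → X)
    (hxnull : ∀ M : ℕ, 1 ≤ M → M ≤ N →
      ∀ A : ContinuousMultilinearMap ℂ (fun _ : Fin M => X) ℂ,
        Tendsto (fun n => A (fun _ => x n)) atTop (𝓝 0)) :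
    ∀ m : ℕ, N < m →
      ∀ A : ContinuousMultilinearMap ℂ (fun _ : Fin m => X) ℂ,
        Tendsto (fun n => A (fun _ => x n)) atTop (𝓝 0) := by
  -- By strong induction: the conclusion holds for all `m ≥ 1`.
  have key : ∀ m : ℕ, 1 ≤ m →
      ∀ A : ContinuousMultilinearMap ℂ (fun _ : Fin m => X) ℂ,
        Tendsto (fun n => A (fun _ => x n)) atTop (𝓝 0) := by
    intro m
    induction m using Nat.strong_induction_on with
    | _ m IH =>
      intro hm A
      by_cases hmN : m ≤ N
      · exact hxnull m hm hmN A
      · push_neg at hmN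
        -- m > N; write m = k + N with 1 ≤ k < m
        set k := m - N with hk_def
        have hkN : k + N = m := Nat.sub_add_cancel hmN.le
        have hk1 : 1 ≤ k := by omega
        have hkm : k < m := by omega
        -- transfer A to a map on Fin (k + N)
        let e : Fin m ≃ Fin (k + N) := finCongr hkN.symm
        let A' : ContinuousMultilinearMap ℂ (fun _ : Fin (k + N) => X) ℂ :=
          A.domDomCongr e
        have hA'const : ∀ y : X, A' (fun _ => y) = A (fun _ => y) := fun y => rfl
        -- choose a subset of cardinality k
        obtain ⟨s, _, hs⟩ := Finset.exists_subset_card_eq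
          (s := (Finset.univ : Finset (Fin (k + N)))) (n := k) (by simp)
        have hsc : sᶜ.card = N := by
          rw [Finset.card_compl, hs]
          simp
        let C : ContinuousMultilinearMap ℂ (fun _ : Fin k => X)
            (ContinuousMultilinearMap ℂ (fun _ : Fin N => X) ℂ) :=
          ContinuousMultilinearMap.curryFinFinset ℂ X ℂ hs hsc A'
        let Q : ℕ → ContinuousMultilinearMap ℂ (fun _ : Fin N => X) ℂ :=
          fun n => C (fun _ => x n)
        have hQdiag : ∀ n, Q n (fun _ => x n) = A (fun _ => x n) := by
          intro n
          show ContinuousMultilinearMap.curryFinFinset ℂ X ℂ hs hsc A'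
            (fun _ => x n) (fun _ => x n) = _
          rw [ContinuousMultilinearMap.curryFinFinset_apply_const,
            Finset.piecewise_same, hA'const]
        -- symmetrize
        let P : ℕ → ContinuousMultilinearMap ℂ (fun _ : Fin N => X) ℂ :=
          fun n => ∑ τ : Equiv.Perm (Fin N), (Q n).domDomCongr τ
        have hPapp : ∀ n (v : Fin N → X),
            P n v = ∑ τ : Equiv.Perm (Fin N), Q n (fun i => v (τ i)) := by
          intro n v
          simp [P, ContinuousMultilinearMap.sum_apply,
            ContinuousMultilinearMap.domDomCongr_apply]
        -- symmetry of P n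
        have hPsymm : ∀ n (σ : Equiv.Perm (Fin N)) (v : Fin N → X),
            P n (v ∘ σ) = P n v := by
          intro n σ v
          rw [hPapp, hPapp]
          refine Fintype.sum_bijective (fun τ => τ.trans σ)
            (Equiv.bijective (⟨fun τ => τ.trans σ, fun τ => τ.trans σ.symm,
              fun τ => by ext i; simp, fun τ => by ext i; simp⟩ :
                Equiv.Perm (Fin N) ≃ Equiv.Perm (Fin N))) _ _ ?_
          intro τ
          rfl
        -- weak nullness of P n
        have hPweak : ∀ Φ : StrongDual ℂ
            (ContinuousMultilinearMap ℂ (fun _ : Fin N => X) ℂ),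
            Tendsto (fun n => Φ (P n)) atTop (𝓝 0) := by
          intro Φ
          have : ∀ n, Φ (P n) = ∑ τ : Equiv.Perm (Fin N),
              ((Φ.comp ((ContinuousMultilinearMap.domDomCongrₗᵢ ℂ X ℂ
                τ).toContinuousLinearEquiv.toContinuousLinearMap)).compContinuousMultilinearMap
                C) (fun _ => x n) := by
            intro n
            simp only [P, map_sum]
            rfl
          simp only [this]
          rw [show (0 : ℂ) = ∑ _τ : Equiv.Perm (Fin N), (0 : ℂ) by simp]
          refine tendsto_finset_sum _ fun τ _ => ?_
          exact IH k hkm hk1 _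
        -- apply the DP property with x₀ = 0
        have hx0 : ∀ M : ℕ, 1 ≤ M → M ≤ N →
            ∀ B : ContinuousMultilinearMap ℂ (fun _ : Fin M => X) ℂ,
              Tendsto (fun n => B (fun _ => x n)) atTop (𝓝 (B (fun _ => (0 : X)))) := by
          intro M hM1 hMN B
          haveI : Nonempty (Fin M) := ⟨⟨0, hM1⟩⟩
          have : B (fun _ => (0 : X)) = 0 := by
            have := B.map_coord_zero (m := fun _ => (0 : X)) (Classical.arbitrary (Fin M)) rfl
            simpa using this
          rw [this]
          exact hxnull M hM1 hMN B
        have hmain := hDP P hPsymm hPweak x 0 hx0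
        -- P n (diag) = card • A (diag)
        have hPdiag : ∀ n, P n (fun _ => x n) =
            (Fintype.card (Equiv.Perm (Fin N)) : ℂ) * A (fun _ => x n) := by
          intro n
          rw [hPapp]
          have : ∀ τ : Equiv.Perm (Fin N),
              Q n (fun i => (fun _ => x n) (τ i)) = A (fun _ => x n) := fun τ => hQdiag n
          rw [Finset.sum_congr rfl (fun τ _ => this τ)]
          simp [Finset.sum_const, nsmul_eq_mul]
        simp only [hPdiag] at hmain
        have hc : (Fintype.card (Equiv.Perm (Fin N)) : ℂ) ≠ 0 := by
          simp [Fintype.card_ne_zero]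
        have := hmain.const_mul ((Fintype.card (Equiv.Perm (Fin N)) : ℂ))⁻¹
        simpa [mul_comm, mul_assoc, inv_mul_cancel₀ hc, mul_left_comm] using this
  intro m hm A
  exact key m (by omega) A
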